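/- Let a = (a₁,…,a_m), m ≥ 1, be nonzero integers such that r := [a₁,…,a_m] lies in ℚ (is not ∞). Then a rational number r̃ belongs to the Γ̂_r-orbit of r or of ∞ in ℙ¹(ℚ) if and only if there exist a positive integer n, c ∈ ℤ, (ε₁,…,εₙ) ∈ {±1}ⁿ and (c₁,…,c_{n−1}) ∈ ℤ^{n−1} such that r̃ = 2c + [ε₁a, 2c₁, ε₂a⁻¹, 2c₂, ε₃a, …, 2c_{n−1}, εₙa^{(−1)^{n−1}}], i.e., r̃ is the image under F(2c) of the continued fraction value of the list obtained by concatenating the blocks ε_j a for j odd, resp. ε_j a⁻¹ for j even, separated by the single entries 2c_j. [Proposition 5.1] -/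

import Mathlib

open Matrix

/-- The group `GL(2,ℤ)`. -/
abbrev GL2Z := Matrix.GeneralLinearGroup (Fin 2) ℤ

/-- The projective line `ℙ¹(ℚ)`. -/
abbrev P1Q := Projectivization ℚ (Fin 2 → ℚ)

/-- The point `∞ = [1 : 0]` of `ℙ¹(ℚ)`. -/
noncomputable def infty : P1Q :=
  Projectivization.mk ℚ ![1, 0] (by
    intro h; simpa using congrFun h 0)

/-- The point `[x : 1]` of `ℙ¹(ℚ)` corresponding to the rational number `x`. -/
noncomputable def ratPt (x : ℚ) : P1Q :=
  Projectivization.mk ℚ ![x, 1] (by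
    intro h; simpa using congrFun h 1)

/-- A matrix in `GL(2,ℤ)` viewed as an invertible matrix over `ℚ`. -/
def glq (M : GL2Z) : Matrix.GeneralLinearGroup (Fin 2) ℚ :=
  Matrix.GeneralLinearGroup.map (Int.castRingHom ℚ) M

lemma glq_inj (M : GL2Z) :
    Function.Injective ((glq M).val.mulVecLin) := by
  have h : ((glq M)⁻¹).val.mulVecLin ∘ₗ (glq M).val.mulVecLin = LinearMap.id := by
    rw [← Matrix.mulVecLin_mul]
    have : ((glq M)⁻¹).val * (glq M).val = 1 := by
      rw [← Units.val_mul, inv_mul_cancel, Units.val_one]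
    rw [this, Matrix.mulVecLin_one]
  intro x y hxy
  have := congrArg ((glq M)⁻¹).val.mulVecLin hxy
  calc x = (((glq M)⁻¹).val.mulVecLin ∘ₗ (glq M).val.mulVecLin) x := by rw [h]; rfl
    _ = (((glq M)⁻¹).val.mulVecLin ∘ₗ (glq M).val.mulVecLin) y := by
        simpa using this
    _ = y := by rw [h]; rfl

/-- The action of `GL(2,ℤ)` on `ℙ¹(ℚ)` by linear fractional transformations:
`(a b; c d)` sends `[x : y]` to `[ax + by : cx + dy]`. -/
noncomputable def act (M : GL2Z) (x : P1Q) : P1Q :=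
  Projectivization.map ((glq M).val.mulVecLin) (glq_inj M) x

/-- The matrix `A₁ = (-1 0; 0 1)`, acting by `x ↦ -x`. -/
def A1 : GL2Z :=
  ⟨!![-1, 0; 0, 1], !![-1, 0; 0, 1], by decide, by decide⟩

/-- The matrix `A₂ = (-1 2; 0 1)`, acting by `x ↦ 2 - x`. -/
def A2 : GL2Z :=
  ⟨!![-1, 2; 0, 1], !![-1, 2; 0, 1], by decide, by decide⟩

/-- The group `Γ_∞`, generated by the reflections `A₁` and `A₂`. -/
def GammaInf : Subgroup GL2Z := Subgroup.closure {A1, A2}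

/-- The group `Γ_r = B Γ_∞ B⁻¹`, for `B ∈ GL(2,ℤ)` with `B·∞ = r`. -/
def Gamma (B : GL2Z) : Subgroup GL2Z :=
  GammaInf.map (MulAut.conj B).toMonoidHom

/-- The group `Γ̂_r`, generated by `Γ_r ∪ Γ_∞`. -/
def GammaHat (B : GL2Z) : Subgroup GL2Z := Gamma B ⊔ GammaInf
/-- The matrix `E(t) = (1 0; t 1)`. -/
def Emat (t : ℤ) : GL2Z :=
  ⟨!![1, 0; t, 1], !![1, 0; -t, 1],
    by simp [Matrix.mul_fin_two, Matrix.one_fin_two],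
    by simp [Matrix.mul_fin_two, Matrix.one_fin_two]⟩

/-- The matrix `F(t) = (1 t; 0 1)`. -/
def Fmat (t : ℤ) : GL2Z :=
  ⟨!![1, t; 0, 1], !![1, -t; 0, 1],
    by simp [Matrix.mul_fin_two, Matrix.one_fin_two],
    by simp [Matrix.mul_fin_two, Matrix.one_fin_two]⟩

/-- The alternating product `E(a₁) F(a₂) E(a₃) ⋯`;
the boolean records whether the next factor is an `E`. -/
def cfMatAux : Bool → List ℤ → GL2Z
  | _, [] => 1
  | true, t :: l => Emat t * cfMatAux false l
  | false, t :: l => Fmat t * cfMatAux true l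

/-- The matrix `E(a₁) F(a₂) E(a₃) ⋯` associated to a continued fraction. -/
def cfMat (l : List ℤ) : GL2Z := cfMatAux true l

/-- The continued fraction value `[a₁, …, a_m] ∈ ℙ¹(ℚ)`: the image of `∞`
(if `m` is odd) resp. of `0` (if `m` is even) under `E(a₁) F(a₂) E(a₃) ⋯`. -/
noncomputable def cfVal (l : List ℤ) : P1Q :=
  act (cfMat l) (if Odd l.length then infty else ratPt 0)
/-- `r̃` belongs to the `Γ̂_r`-orbit of `r` or of `∞` (for `r ∈ ℚ`):
for some (equivalently, any) `B ∈ GL(2,ℤ)` with `B·∞ = r`, some element of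
`Γ̂_r` maps `r` or `∞` to `r̃`. -/
def inOrbit (r : ℚ) (x : P1Q) : Prop :=
  ∃ B : GL2Z, act B infty = ratPt r ∧
    ∃ M ∈ GammaHat B, act M (ratPt r) = x ∨ act M infty = x

/-- The `j`-th block (`j` is `0`-based here, `j+1` in the paper): `ε•a` for `j`
even (paper-odd), and `ε•a⁻¹` (the reversed sequence) for `j` odd (paper-even). -/
def towerBlock (a : List ℤ) (ε : ℤ) (j : ℕ) : List ℤ :=
  (if j % 2 = 0 then a else a.reverse).map fun x => ε * x

/-- The list `(ε₁a, 2c₁, ε₂a⁻¹, 2c₂, ε₃a, …, 2c_{n−1}, εₙa^{(−1)^{n−1}})`: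
the concatenation of the blocks `ε_j a` (`j` odd) resp. `ε_j a⁻¹` (`j` even),
separated by the single entries `2c_j`. -/
def towerList (a : List ℤ) (n : ℕ) (ε : ℕ → ℤ) (c : ℕ → ℤ) : List ℤ :=
  ((List.range n).map fun j =>
    towerBlock a (ε j) j ++ if j + 1 < n then [2 * c j] else []).flatten
section Act

lemma glq_mul (M N : GL2Z) : glq (M * N) = glq M * glq N := map_mul _ _ _

lemma glq_one : glq (1 : GL2Z) = 1 := map_one _

lemma glq_val (M : GL2Z) : (glq M).val = (M.val).map (Int.cast : ℤ → ℚ) := rfl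

lemma act_mk (M : GL2Z) (v : Fin 2 → ℚ) (hv : v ≠ 0) :
    act M (Projectivization.mk ℚ v hv) =
      Projectivization.mk ℚ ((glq M).val *ᵥ v)
        (by have h := (glq_inj M).ne hv; rw [map_zero] at h; simpa [Matrix.mulVecLin_apply] using h) := by
  rw [act, Projectivization.map_mk]
  congr 1

lemma act_mul (M N : GL2Z) (x : P1Q) : act (M * N) x = act M (act N x) := by
  induction x using Projectivization.ind with
  | h v hv =>
    rw [act_mk, act_mk, act_mk]
    congr 1
    rw [glq_mul, Units.val_mul, Matrix.mulVec_mulVec]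

lemma act_one (x : P1Q) : act (1 : GL2Z) x = x := by
  induction x using Projectivization.ind with
  | h v hv =>
    rw [act_mk]
    congr 1
    rw [glq_one, Units.val_one, Matrix.one_mulVec]

lemma act_neg (M N : GL2Z) (h : (M.val : Matrix (Fin 2) (Fin 2) ℤ) = -N.val) (x : P1Q) :
    act M x = act N x := by
  induction x using Projectivization.ind with
  | h v hv =>
    rw [act_mk, act_mk, Projectivization.mk_eq_mk_iff']
    refine ⟨-1, ?_⟩
    have : (glq M).val = -(glq N).val := by
      rw [glq_val, glq_val, h]
      ext i j
      simp
    rw [this, Matrix.neg_mulVec]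
    simp

lemma act_eq_id (M : GL2Z) (h : (M.val : Matrix (Fin 2) (Fin 2) ℤ) = 1 ∨ M.val = -1) (x : P1Q) :
    act M x = x := by
  rcases h with h | h
  · have : M = 1 := Units.ext h
    rw [this, act_one]
  · rw [act_neg M 1 (by simpa using h), act_one]

end Act
/-- The matrix `J = (0 1; 1 0)`, swapping `∞` and `0`. -/
def Jmat : GL2Z := ⟨!![0,1;1,0], !![0,1;1,0], by decide, by decide⟩

section Points

lemma infty_eq : infty = Projectivization.mk ℚ ![1, 0] (by intro h; simpa using congrFun h 0) := rfl

lemma ratPt_eq (x : ℚ) : ratPt x = Projectivization.mk ℚ ![x, 1] (by intro h; simpa using congrFun h 1) := rfl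

lemma ratPt_ne_infty (x : ℚ) : ratPt x ≠ infty := by
  rw [ratPt_eq, infty_eq, Ne, Projectivization.mk_eq_mk_iff']
  rintro ⟨z, hz⟩
  have h0 := congrFun hz 0
  have h1 := congrFun hz 1
  simp at h0 h1

lemma mulVec_concrete (M : GL2Z) (v : Fin 2 → ℚ) :
    (glq M).val *ᵥ v = ![(M.val 0 0 : ℚ) * v 0 + (M.val 0 1 : ℚ) * v 1,
      (M.val 1 0 : ℚ) * v 0 + (M.val 1 1 : ℚ) * v 1] := by
  funext i
  fin_cases i <;>
    simp [glq_val, Matrix.mulVec, dotProduct, Fin.sum_univ_two, Matrix.map_apply]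

lemma act_infty (M : GL2Z) :
    act M infty = Projectivization.mk ℚ ![(M.val 0 0 : ℚ), (M.val 1 0 : ℚ)]
      (by
        intro h
        have h0 := congrFun h 0
        have h1 := congrFun h 1
        simp at h0 h1
        have hdet : M.val.det = 0 := by
          rw [Matrix.det_fin_two, h0, h1]; ring
        have hU := Matrix.isUnit_iff_isUnit_det _ |>.mp (Units.isUnit M)
        rw [hdet] at hU
        simp at hU) := by
  rw [infty_eq, act_mk]
  congr 1
  rw [mulVec_concrete]
  norm_num

lemma act_zeroPt (M : GL2Z) :
    act M (ratPt 0) = Projectivization.mk ℚ ![(M.val 0 1 : ℚ), (M.val 1 1 : ℚ)]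
      (by
        intro h
        have h0 := congrFun h 0
        have h1 := congrFun h 1
        simp at h0 h1
        have hdet : M.val.det = 0 := by
          rw [Matrix.det_fin_two, h0, h1]; ring
        have hU := Matrix.isUnit_iff_isUnit_det _ |>.mp (Units.isUnit M)
        rw [hdet] at hU
        simp at hU) := by
  rw [ratPt_eq, act_mk]
  congr 1
  rw [mulVec_concrete]
  norm_num

lemma act_fix_of_col (M : GL2Z) (h0 : M.val 1 0 = 0) (h1 : M.val 0 0 = 1 ∨ M.val 0 0 = -1) :
    act M infty = infty := by
  rw [act_infty, infty_eq, Projectivization.mk_eq_mk_iff']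
  refine ⟨(M.val 0 0 : ℚ), ?_⟩
  funext i
  fin_cases i <;> rcases h1 with h1 | h1 <;> simp [h0, h1]

lemma act_A1_infty : act A1 infty = infty := act_fix_of_col A1 rfl (Or.inr rfl)

lemma act_A1_zero : act A1 (ratPt 0) = ratPt 0 := by
  rw [act_zeroPt, ratPt_eq, Projectivization.mk_eq_mk_iff']
  exact ⟨1, by funext i; fin_cases i <;> simp [A1]⟩

lemma act_Fmat_infty (t : ℤ) : act (Fmat t) infty = infty :=
  act_fix_of_col (Fmat t) rfl (Or.inl rfl)

lemma act_Jmat_infty : act Jmat infty = ratPt 0 := by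
  rw [act_infty, ratPt_eq, Projectivization.mk_eq_mk_iff']
  exact ⟨1, by funext i; fin_cases i <;> simp [Jmat]⟩

lemma act_Jmat_zero : act Jmat (ratPt 0) = infty := by
  rw [act_zeroPt, infty_eq, Projectivization.mk_eq_mk_iff']
  exact ⟨1, by funext i; fin_cases i <;> simp [Jmat]⟩

end Points
section CFMat

/-- The next matrix: `E` if the bool is `true`, else `F`. -/
def Gm (b : Bool) (t : ℤ) : GL2Z := if b then Emat t else Fmat t

lemma cfMatAux_nil (b : Bool) : cfMatAux b [] = 1 := by cases b <;> rfl

lemma cfMatAux_cons (b : Bool) (t : ℤ) (l : List ℤ) :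
    cfMatAux b (t :: l) = Gm b t * cfMatAux (!b) l := by cases b <;> rfl

/-- The bool obtained from `b` after consuming `n` entries. -/
def nb (b : Bool) (n : ℕ) : Bool := if n % 2 = 0 then b else !b

lemma nb_zero (b : Bool) : nb b 0 = b := rfl

lemma nb_succ (b : Bool) (n : ℕ) : nb b (n + 1) = nb (!b) n := by
  simp only [nb]
  rcases Nat.mod_two_eq_zero_or_one n with h | h <;> simp [Nat.add_mod, h]

lemma conj_mul_conj {G : Type*} [Group G] (u x y : G) (hu : u * u = 1) :
    u * x * u * (u * y * u) = u * (x * y) * u := by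
  simp only [mul_assoc]
  rw [← mul_assoc u u (y * u), hu, one_mul]

lemma cfMatAux_append (l₁ l₂ : List ℤ) : ∀ b : Bool,
    cfMatAux b (l₁ ++ l₂) = cfMatAux b l₁ * cfMatAux (nb b l₁.length) l₂ := by
  induction l₁ with
  | nil => intro b; simp [cfMatAux_nil, nb_zero]
  | cons t l ih =>
    intro b
    rw [List.cons_append, cfMatAux_cons, ih, cfMatAux_cons, List.length_cons, nb_succ, mul_assoc]

lemma A1_conj_Gm (b : Bool) (t : ℤ) : A1 * Gm b t * A1 = Gm b (-t) := by
  apply Units.ext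
  cases b <;>
    simp [Gm, A1, Emat, Fmat, Units.val_mul, Matrix.mul_fin_two]

lemma A1_mul_A1 : A1 * A1 = 1 := by
  apply Units.ext
  simp [A1, Units.val_mul, Matrix.mul_fin_two, Matrix.one_fin_two]

lemma cfMatAux_neg (l : List ℤ) : ∀ b : Bool,
    cfMatAux b (l.map fun x => -1 * x) = A1 * cfMatAux b l * A1 := by
  induction l with
  | nil => intro b; simp [cfMatAux_nil, A1_mul_A1]
  | cons t l ih =>
    intro b
    rw [List.map_cons, cfMatAux_cons, cfMatAux_cons, ih]
    have : Gm b (-1 * t) = A1 * Gm b t * A1 := by rw [A1_conj_Gm]; norm_num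
    rw [this, conj_mul_conj _ _ _ A1_mul_A1]

lemma Gm_transpose (b : Bool) (t : ℤ) : ((Gm b t).val)ᵀ = (Gm (!b) t).val := by
  cases b <;>
    (apply Matrix.ext; intro i j;
     fin_cases i <;> fin_cases j <;> simp [Gm, Emat, Fmat, Matrix.transpose_apply])

lemma nb_not_nb (b : Bool) (n : ℕ) : nb (nb b n) n = b := by
  unfold nb; split <;> simp

lemma cfMatAux_reverse (l : List ℤ) : ∀ b : Bool,
    ((cfMatAux b l).val)ᵀ = (cfMatAux (nb b l.length) l.reverse).val := by
  induction l with
  | nil => intro b; simp [cfMatAux_nil]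
  | cons t l ih =>
    intro b
    rw [cfMatAux_cons, List.reverse_cons, Units.val_mul, Matrix.transpose_mul, ih]
    rw [cfMatAux_append, List.length_reverse, List.length_cons, nb_succ, nb_not_nb]
    rw [Units.val_mul]
    congr 1
    rw [cfMatAux_cons, cfMatAux_nil, mul_one, Gm_transpose]

lemma Jmat_conj_Gm (b : Bool) (t : ℤ) : Jmat * Gm b t * Jmat = Gm (!b) t := by
  apply Units.ext
  cases b <;>
    simp [Gm, Jmat, Emat, Fmat, Units.val_mul, Matrix.mul_fin_two]

lemma Jmat_mul_Jmat : Jmat * Jmat = 1 := by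
  apply Units.ext
  simp [Jmat, Units.val_mul, Matrix.mul_fin_two, Matrix.one_fin_two]

lemma cfMatAux_not (l : List ℤ) : ∀ b : Bool,
    cfMatAux (!b) l = Jmat * cfMatAux b l * Jmat := by
  induction l with
  | nil => intro b; simp [cfMatAux_nil, Jmat_mul_Jmat]
  | cons t l ih =>
    intro b
    rw [cfMatAux_cons, cfMatAux_cons, Bool.not_not, ← Jmat_conj_Gm]
    have := ih (!b)
    rw [Bool.not_not] at this
    rw [this, conj_mul_conj _ _ _ Jmat_mul_Jmat]

end CFMat
section Inverse

lemma detu (M : GL2Z) : M.val.det = 1 ∨ M.val.det = -1 :=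
  Int.isUnit_iff.mp (Matrix.isUnit_iff_isUnit_det _ |>.mp (Units.isUnit M))

lemma A1v_mul_A1v : A1.val * A1.val = (1 : Matrix (Fin 2) (Fin 2) ℤ) := by decide

lemma J_transpose_J (M : Matrix (Fin 2) (Fin 2) ℤ) :
    Jmat.val * Mᵀ * Jmat.val = A1.val * M.adjugate * A1.val := by
  apply Matrix.ext; intro i j
  fin_cases i <;> fin_cases j <;>
    simp [Jmat, A1, Matrix.adjugate_fin_two, Matrix.mul_apply, Fin.sum_univ_two,
      Matrix.transpose_apply, Matrix.vecMul, dotProduct, Matrix.vecHead,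
      Matrix.vecTail] <;> ring

lemma act_congr (M N : GL2Z) (h : M.val = N.val ∨ M.val = -N.val) (q : P1Q) :
    act M q = act N q := by
  rcases h with h | h
  · rw [Units.ext h]
  · exact act_neg M N h q

lemma act_smul_one (M : GL2Z) (d : ℤ) (hd : d = 1 ∨ d = -1)
    (h : M.val = d • (1 : Matrix (Fin 2) (Fin 2) ℤ)) (q : P1Q) : act M q = q := by
  apply act_eq_id
  rcases hd with hd | hd
  · left; rw [h, hd, one_smul]
  · right; rw [h, hd]; simp

lemma cfMat_rev_odd (l : List ℤ) (h : l.length % 2 = 1) :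
    (cfMat l.reverse).val = Jmat.val * ((cfMat l).val)ᵀ * Jmat.val := by
  have h2 := cfMatAux_reverse l true
  rw [show nb true l.length = false by simp [nb, h]] at h2
  have h3 := cfMatAux_not l.reverse false
  simp only [Bool.not_false] at h3
  rw [show cfMat l.reverse = cfMatAux true l.reverse from rfl, h3]
  rw [Units.val_mul, Units.val_mul, ← h2]
  rfl

lemma cfMat_rev_even (l : List ℤ) (h : l.length % 2 = 0) :
    (cfMat l.reverse).val = ((cfMat l).val)ᵀ := by
  have h2 := cfMatAux_reverse l true
  rw [show nb true l.length = true by simp [nb, h]] at h2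
  exact h2.symm

lemma act_inv_odd (l : List ℤ) (h : l.length % 2 = 1) (q : P1Q) :
    act (cfMat l) (act A1 (act (cfMat l.reverse) (act A1 q))) = q := by
  rw [← act_mul, ← act_mul, ← act_mul]
  apply act_smul_one _ ((cfMat l).val.det) (detu _)
  rw [Units.val_mul, Units.val_mul, Units.val_mul, cfMat_rev_odd l h, J_transpose_J]
  simp only [← mul_assoc]
  rw [mul_assoc ((cfMat l).val) A1.val A1.val, A1v_mul_A1v, mul_one]
  rw [mul_assoc ((cfMat l).val * (cfMat l).val.adjugate) A1.val A1.val, A1v_mul_A1v, mul_one]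
  rw [Matrix.mul_adjugate]

lemma act_inv_even (l : List ℤ) (h : l.length % 2 = 0) (q : P1Q) :
    act (cfMat l) (act A1 (act Jmat (act (cfMat l.reverse) (act Jmat (act A1 q))))) = q := by
  rw [← act_mul, ← act_mul, ← act_mul, ← act_mul, ← act_mul]
  apply act_smul_one _ ((cfMat l).val.det) (detu _)
  rw [Units.val_mul, Units.val_mul, Units.val_mul, Units.val_mul, Units.val_mul,
    cfMat_rev_even l h]
  rw [mul_assoc ((cfMat l).val * A1.val) Jmat.val ((cfMat l).val)ᵀ]
  rw [mul_assoc ((cfMat l).val * A1.val) (Jmat.val * ((cfMat l).val)ᵀ) Jmat.val]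
  rw [J_transpose_J]
  simp only [← mul_assoc]
  rw [mul_assoc ((cfMat l).val) A1.val A1.val, A1v_mul_A1v, mul_one]
  rw [mul_assoc ((cfMat l).val * (cfMat l).val.adjugate) A1.val A1.val, A1v_mul_A1v, mul_one]
  rw [Matrix.mul_adjugate]

lemma act_left_cancel (M : GL2Z) {x y : P1Q} (h : act M x = act M y) : x = y := by
  have := congrArg (act M⁻¹) h
  rwa [← act_mul, ← act_mul, inv_mul_cancel, act_one, act_one] at this

end Inverse
section Tower

/-- Negate all entries of a list. -/
def negl (l : List ℤ) : List ℤ := l.map fun x => (-1 : ℤ) * x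

lemma negl_negl (l : List ℤ) : negl (negl l) = l := by
  unfold negl
  rw [List.map_map]
  have h : ((fun x => (-1:ℤ) * x) ∘ fun x => (-1:ℤ) * x) = id := by
    funext x; simp
  rw [h, List.map_id]

lemma map_one_mul (l : List ℤ) : (l.map fun x => (1:ℤ) * x) = l := by simp

/-- `Pt n` : the base point for a list of length `n`. -/
noncomputable def Pt (n : ℕ) : P1Q := if Odd n then infty else ratPt 0

lemma cfVal_eq (l : List ℤ) : cfVal l = act (cfMat l) (Pt l.length) := rfl

lemma Pt_parity {n m : ℕ} (h : n % 2 = m % 2) : Pt n = Pt m := by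
  unfold Pt
  rcases Nat.mod_two_eq_zero_or_one n with h' | h' <;>
    · rw [h'] at h
      simp [Nat.odd_iff, h', h.symm]

lemma towerBlock_add_two (a : List ℤ) (e : ℤ) (j : ℕ) :
    towerBlock a e (j + 2) = towerBlock a e j := by
  simp [towerBlock, Nat.add_mod]

lemma towerList_one (a : List ℤ) (ε cs : ℕ → ℤ) :
    towerList a 1 ε cs = a.map fun x => ε 0 * x := by
  simp [towerList, towerBlock, List.range_succ]

lemma towerList_two (a : List ℤ) (ε cs : ℕ → ℤ) :
    towerList a 2 ε cs =
      (a.map fun x => ε 0 * x) ++ 2 * cs 0 :: (a.reverse.map fun x => ε 1 * x) := by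
  simp [towerList, towerBlock, List.range_succ]

lemma towerList_step (a : List ℤ) (n : ℕ) (hn : 1 ≤ n) (ε cs : ℕ → ℤ) :
    towerList a (n+2) ε cs = (a.map fun x => ε 0 * x) ++ 2 * cs 0 ::
      ((a.reverse.map fun x => ε 1 * x) ++ 2 * cs 1 ::
        towerList a n (fun j => ε (j+2)) (fun j => cs (j+2))) := by
  rw [towerList, show n + 2 = 2 + n by omega, List.range_add, List.map_append,
    List.flatten_append, List.map_map]
  have h1 : ((List.range 2).map fun j =>
      towerBlock a (ε j) j ++ if j + 1 < 2 + n then [2 * cs j] else []).flatten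
      = (a.map fun x => ε 0 * x) ++ 2 * cs 0 :: ((a.reverse.map fun x => ε 1 * x) ++ [2 * cs 1]) := by
    have : (0:ℕ) + 1 < 2 + n := by omega
    have h2 : (1:ℕ) + 1 < 2 + n := by omega
    simp [List.range_succ, towerBlock, this, h2]
  rw [h1]
  have h2 : ((List.range n).map ((fun j => towerBlock a (ε j) j ++
      if j + 1 < 2 + n then [2 * cs j] else []) ∘ fun x => 2 + x)).flatten
      = towerList a n (fun j => ε (j+2)) (fun j => cs (j+2)) := by
    rw [towerList]
    congr 1
    apply List.map_congr_left
    intro j hj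
    simp only [Function.comp_apply]
    rw [show 2 + j = j + 2 by omega, towerBlock_add_two]
    congr 1
    by_cases h : j + 1 < n
    · rw [if_pos (by omega), if_pos h]
    · rw [if_neg (by omega), if_neg h]
  rw [h2]
  simp [List.append_assoc]

lemma towerList_congr (a : List ℤ) (n : ℕ) (ε ε' cs cs' : ℕ → ℤ)
    (hε : ∀ j < n, ε j = ε' j) (hcs : ∀ j, j + 1 < n → cs j = cs' j) :
    towerList a n ε cs = towerList a n ε' cs' := by
  unfold towerList
  congr 1
  apply List.map_congr_left
  intro j hj
  rw [List.mem_range] at hj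
  rw [hε j hj]
  congr 1
  by_cases h : j + 1 < n
  · rw [if_pos h, if_pos h, hcs j h]
  · rw [if_neg h, if_neg h]

lemma towerList_neg (a : List ℤ) (n : ℕ) (ε cs : ℕ → ℤ) :
    towerList a n (fun j => -ε j) (fun j => -cs j) = negl (towerList a n ε cs) := by
  unfold towerList negl
  rw [List.map_flatten, List.map_map]
  congr 1
  apply List.map_congr_left
  intro j hj
  simp only [Function.comp_apply, List.map_append]
  congr 1
  · unfold towerBlock
    rw [List.map_map]
    congr 1
    funext x
    simp only [Function.comp_apply]
    ring
  · by_cases h : j + 1 < n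
    · simp only [if_pos h, List.map_cons, List.map_nil]
      congr 1
      ring
    · simp only [if_neg h, List.map_nil]

end Tower
section Swap

lemma unit_eq (M N : GL2Z) (h : M.val = N.val) : M = N := Units.ext h

lemma A1_mul_Fmat (t : ℤ) : A1 * Fmat t = Fmat (-t) * A1 := by
  apply unit_eq
  simp only [Units.val_mul, A1, Fmat]
  apply Matrix.ext; intro i j
  fin_cases i <;> fin_cases j <;>
    simp [Matrix.mul_apply, Fin.sum_univ_two]

lemma act_A1_Fmat (t : ℤ) (q : P1Q) :
    act A1 (act (Fmat t) q) = act (Fmat (-t)) (act A1 q) := by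
  rw [← act_mul, ← act_mul, A1_mul_Fmat]

lemma cfMat_negl (l : List ℤ) : cfMat (negl l) = A1 * cfMat l * A1 := cfMatAux_neg l true

lemma A1_mul_cfMat (l : List ℤ) : A1 * cfMat l = cfMat (negl l) * A1 := by
  rw [cfMat_negl, mul_assoc, mul_assoc, A1_mul_A1, mul_one]

lemma act_A1_cfMat (l : List ℤ) (q : P1Q) :
    act A1 (act (cfMat l) q) = act (cfMat (negl l)) (act A1 q) := by
  rw [← act_mul, ← act_mul, A1_mul_cfMat]

lemma act_A1_A1 (q : P1Q) : act A1 (act A1 q) = q := by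
  rw [← act_mul, A1_mul_A1, act_one]

lemma act_J_J (q : P1Q) : act Jmat (act Jmat q) = q := by
  rw [← act_mul, Jmat_mul_Jmat, act_one]

lemma act_A1_Pt (n : ℕ) : act A1 (Pt n) = Pt n := by
  unfold Pt
  split
  · exact act_A1_infty
  · exact act_A1_zero

lemma act_conj_swap (u x : GL2Z) (hu : u * u = 1) (q : P1Q) :
    act u (act x q) = act (u * x * u) (act u q) := by
  have h : u * x * u * u = u * x := by rw [mul_assoc (u * x) u u, hu, mul_one]
  rw [← act_mul, ← act_mul, h]

lemma act_inv_odd' (l : List ℤ) (h : l.length % 2 = 1) (q : P1Q) :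
    act (cfMat l)⁻¹ q = act (cfMat (negl l.reverse)) q := by
  apply act_left_cancel (cfMat l)
  rw [← act_mul, mul_inv_cancel, act_one]
  rw [cfMat_negl, act_mul, act_mul]
  exact (act_inv_odd l h q).symm

lemma act_inv_even' (l : List ℤ) (h : l.length % 2 = 0) (q : P1Q) :
    act (cfMat l)⁻¹ q = act Jmat (act (cfMat (negl l.reverse)) (act Jmat q)) := by
  apply act_left_cancel (cfMat l)
  rw [← act_mul, mul_inv_cancel, act_one]
  -- goal: act (cfMat l) (act J (act (cfMat (negl l.rev)) (act J q))) = q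
  have h1 : act (cfMat (negl l.reverse)) (act Jmat q)
      = act A1 (act (cfMat l.reverse) (act A1 (act Jmat q))) := by
    rw [cfMat_negl, act_mul, act_mul]
  rw [h1]
  -- goal: act (cfMat l) (act J (act A1 (act R̃ (act A1 (act J q))))) = q
  -- use act_inv_even: act (cfMat l) (act A1 (act J (act R̃ (act J (act A1 q))))) = q
  -- need swaps J∘A1 = A1∘J (up to sign)
  have hJA : ∀ w : P1Q, act Jmat (act A1 w) = act A1 (act Jmat w) := by
    intro w
    rw [← act_mul, ← act_mul]
    apply act_congr
    right
    simp only [Units.val_mul, Jmat, A1]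
    apply Matrix.ext; intro i j
    fin_cases i <;> fin_cases j <;> simp [Matrix.mul_apply, Fin.sum_univ_two]
  have h2 : act A1 (act Jmat (act (cfMat l.reverse) (act Jmat (act A1 q))))
      = act Jmat (act A1 (act (cfMat l.reverse) (act A1 (act Jmat q)))) := by
    rw [← hJA (act (cfMat l.reverse) (act Jmat (act A1 q))), hJA q]
  rw [← h2]
  exact (act_inv_even l h q).symm

lemma act_cfMatAux_chain (b : Bool) (L1 L2 : List ℤ) (x : ℤ) (P : P1Q) :
    act (cfMatAux b (L1 ++ x :: L2)) P
      = act (cfMatAux b L1)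
          (act (Gm (nb b L1.length) x) (act (cfMatAux (!(nb b L1.length)) L2) P)) := by
  rw [cfMatAux_append, cfMatAux_cons, act_mul, act_mul]

lemma act_cfMatAux_false (l : List ℤ) (P : P1Q) :
    act (cfMatAux false l) P = act Jmat (act (cfMat l) (act Jmat P)) := by
  have := cfMatAux_not l true
  simp only [Bool.not_true] at this
  rw [this, act_mul, act_mul]
  rfl

end Swap
section Master

/-- Extend a sequence by two prescribed initial values. -/
def ext2 (x y : ℤ) (f : ℕ → ℤ) : ℕ → ℤ
  | 0 => x
  | 1 => y
  | (j+2) => f j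

lemma Gm_false (t : ℤ) : Gm false t = Fmat t := rfl
lemma Gm_true (t : ℤ) : Gm true t = Emat t := rfl
lemma cfMatAux_true (l : List ℤ) : cfMatAux true l = cfMat l := rfl

lemma act_cfMat_chain (L1 L2 : List ℤ) (x : ℤ) (P : P1Q) :
    act (cfMat (L1 ++ x :: L2)) P
      = act (cfMat L1)
          (act (Gm (nb true L1.length) x) (act (cfMatAux (!(nb true L1.length)) L2) P)) :=
  act_cfMatAux_chain true L1 L2 x P

lemma act_J_A1 (w : P1Q) : act Jmat (act A1 w) = act A1 (act Jmat w) := by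
  rw [← act_mul, ← act_mul]
  apply act_congr
  right
  simp only [Units.val_mul, Jmat, A1]
  apply Matrix.ext; intro i j
  fin_cases i <;> fin_cases j <;> simp [Matrix.mul_apply, Fin.sum_univ_two]

lemma master_odd (a : List ℤ) (hm : a.length % 2 = 1) (γ : GL2Z) (s k : ℤ)
    (hs : s = 1 ∨ s = -1) (hγ : γ.val = !![s, 2*k; 0, 1]) (n : ℕ) (hn : 1 ≤ n)
    (ε cs : ℕ → ℤ) (c : ℤ) :
    act (cfMat a * γ * (cfMat a)⁻¹) (act (Fmat (2*c)) (cfVal (towerList a n ε cs)))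
      = cfVal (towerList a (n+2)
          (ext2 1 (-s) (fun j => s * ε j)) (ext2 k (s*c) (fun j => s * cs j))) := by
  have hnbt : nb true a.length = false := by simp [nb, hm]
  have hnbr : nb true (negl a.reverse).length = false := by simp [nb, negl, hm]
  have hnbr2 : nb true (a.reverse).length = false := by simp [nb, hm]
  set Ln := towerList a n ε cs with hLn
  rw [act_mul, act_mul, act_inv_odd' a hm, cfVal_eq]
  rcases hs with hs | hs <;> subst hs
  · -- s = 1
    have hγ' : γ = Fmat (2*k) := unit_eq _ _ hγ
    subst hγ'
    have hRHS : towerList a (n+2) (ext2 1 (-1) (fun j => 1 * ε j)) (ext2 k (1*c) (fun j => 1 * cs j))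
        = a ++ 2 * k :: (negl a.reverse ++ 2 * c :: Ln) := by
      rw [towerList_step a n hn]
      simp only [ext2, one_mul, List.map_id']
      rfl
    rw [hRHS, cfVal_eq]
    have hPt : Pt (a ++ 2 * k :: (negl a.reverse ++ 2 * c :: Ln)).length = Pt Ln.length :=
      Pt_parity (by simp [negl]; omega)
    rw [hPt, act_cfMat_chain a (negl a.reverse ++ 2 * c :: Ln) (2*k) _]
    rw [hnbt, Gm_false, Bool.not_false, cfMatAux_true]
    rw [act_cfMat_chain (negl a.reverse) Ln (2*c) _]
    rw [hnbr, Gm_false, Bool.not_false, cfMatAux_true]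
  · -- s = -1
    have hγ' : γ = Fmat (2*k) * A1 := by
      apply unit_eq
      rw [hγ]
      simp only [Units.val_mul, Fmat, A1]
      apply Matrix.ext; intro i j
      fin_cases i <;> fin_cases j <;> simp [Matrix.mul_apply, Fin.sum_univ_two]
    subst hγ'
    rw [act_mul]
    rw [act_A1_cfMat (negl a.reverse), negl_negl]
    rw [act_A1_Fmat, act_A1_cfMat Ln, act_A1_Pt]
    have hRHS : towerList a (n+2) (ext2 1 (-(-1)) (fun j => -1 * ε j)) (ext2 k (-1*c) (fun j => -1 * cs j))
        = a ++ 2 * k :: (a.reverse ++ -(2 * c) :: negl Ln) := by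
      rw [towerList_step a n hn]
      simp only [ext2, one_mul, neg_neg, neg_mul, mul_neg, List.map_id']
      rw [show (fun j => -ε j) = (fun j => -ε j) from rfl]
      congr 1
      rw [hLn, ← towerList_neg]
    rw [hRHS, cfVal_eq]
    have hPt : Pt (a ++ 2 * k :: (a.reverse ++ -(2 * c) :: negl Ln)).length = Pt Ln.length :=
      Pt_parity (by simp [negl]; omega)
    rw [hPt, act_cfMat_chain a (a.reverse ++ -(2 * c) :: negl Ln) (2*k) _]
    rw [hnbt, Gm_false, Bool.not_false, cfMatAux_true]
    rw [act_cfMat_chain (a.reverse) (negl Ln) (-(2*c)) _]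
    rw [hnbr2, Gm_false, Bool.not_false, cfMatAux_true]

end Master
section Master2

lemma master_odd_infty (a : List ℤ) (hm : a.length % 2 = 1) (γ : GL2Z) (s k : ℤ)
    (hs : s = 1 ∨ s = -1) (hγ : γ.val = !![s, 2*k; 0, 1]) :
    act (cfMat a * γ * (cfMat a)⁻¹) infty
      = cfVal (towerList a 2 (ext2 1 (-s) fun _ => 0) (ext2 k 0 fun _ => 0)) := by
  have hnbt : nb true a.length = false := by simp [nb, hm]
  simp only [act_mul]
  rw [act_inv_odd' a hm]
  rcases hs with hs | hs <;> subst hs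
  · have hγ' : γ = Fmat (2*k) := unit_eq _ _ hγ
    subst hγ'
    have hRHS : towerList a 2 (ext2 1 (-1) fun _ => (0:ℤ)) (ext2 k 0 fun _ => 0)
        = a ++ 2 * k :: negl a.reverse := by
      rw [towerList_two]
      simp only [ext2, one_mul, List.map_id']
      rfl
    rw [hRHS, cfVal_eq]
    have hPt : Pt (a ++ 2 * k :: negl a.reverse).length = infty := by
      unfold Pt
      rw [if_pos]
      simp [negl, Nat.odd_iff]
    rw [hPt, act_cfMat_chain a (negl a.reverse) (2*k) _]
    rw [hnbt, Gm_false, Bool.not_false, cfMatAux_true]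
  · have hγ' : γ = Fmat (2*k) * A1 := by
      apply unit_eq
      rw [hγ]
      simp only [Units.val_mul, Fmat, A1]
      apply Matrix.ext; intro i j
      fin_cases i <;> fin_cases j <;> simp [Matrix.mul_apply, Fin.sum_univ_two]
    subst hγ'
    rw [act_mul, act_A1_cfMat (negl a.reverse), negl_negl, act_A1_infty]
    have hRHS : towerList a 2 (ext2 1 (-(-1)) fun _ => (0:ℤ)) (ext2 k 0 fun _ => 0)
        = a ++ 2 * k :: a.reverse := by
      rw [towerList_two]
      simp only [ext2, one_mul, neg_neg, List.map_id']
    rw [hRHS, cfVal_eq]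
    have hPt : Pt (a ++ 2 * k :: a.reverse).length = infty := by
      unfold Pt
      rw [if_pos]
      simp [Nat.odd_iff]
    rw [hPt, act_cfMat_chain a (a.reverse) (2*k) _]
    rw [hnbt, Gm_false, Bool.not_false, cfMatAux_true]

lemma Jmat_inv : Jmat⁻¹ = Jmat := inv_eq_of_mul_eq_one_right Jmat_mul_Jmat

lemma master_even (a : List ℤ) (hm : a.length % 2 = 0) (γ : GL2Z) (s k : ℤ)
    (hs : s = 1 ∨ s = -1) (hγ : γ.val = !![s, 2*k; 0, 1]) (n : ℕ) (hn : 1 ≤ n)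
    (ε cs : ℕ → ℤ) (c : ℤ) :
    act ((cfMat a * Jmat) * γ * (cfMat a * Jmat)⁻¹) (act (Fmat (2*c)) (cfVal (towerList a n ε cs)))
      = cfVal (towerList a (n+2)
          (ext2 1 (-s) (fun j => s * ε j)) (ext2 k (s*c) (fun j => s * cs j))) := by
  have hnbt : nb true a.length = true := by simp [nb, hm]
  have hnbr : nb false (negl a.reverse).length = false := by simp [nb, negl, hm]
  have hnbr2 : nb false (a.reverse).length = false := by simp [nb, hm]
  set Ln := towerList a n ε cs with hLn
  rw [_root_.mul_inv_rev, Jmat_inv, cfVal_eq]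
  simp only [act_mul]
  rw [act_inv_even' a hm, act_J_J]
  rw [act_conj_swap Jmat γ Jmat_mul_Jmat]
  rcases hs with hs | hs <;> subst hs
  · -- s = 1 : JγJ = Emat (2k)
    have hJγJ : Jmat * γ * Jmat = Emat (2*k) := by
      apply unit_eq
      simp only [Units.val_mul, hγ, Jmat, Emat]
      apply Matrix.ext; intro i j
      fin_cases i <;> fin_cases j <;> simp [Matrix.mul_apply, Fin.sum_univ_two]
    rw [hJγJ]
    have hRHS : towerList a (n+2) (ext2 1 (-1) (fun j => 1 * ε j)) (ext2 k (1*c) (fun j => 1 * cs j))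
        = a ++ 2 * k :: (negl a.reverse ++ 2 * c :: Ln) := by
      rw [towerList_step a n hn]
      simp only [ext2, one_mul, List.map_id']
      rfl
    rw [hRHS, cfVal_eq]
    have hPt : Pt (a ++ 2 * k :: (negl a.reverse ++ 2 * c :: Ln)).length = Pt Ln.length :=
      Pt_parity (by simp [negl]; omega)
    rw [hPt, act_cfMat_chain a (negl a.reverse ++ 2 * c :: Ln) (2*k) _]
    rw [hnbt, Gm_true, Bool.not_true]
    rw [act_cfMatAux_chain false (negl a.reverse) Ln (2*c) _]
    rw [hnbr, Gm_false, Bool.not_false, cfMatAux_true]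
    rw [act_cfMatAux_false (negl a.reverse)]
  · -- s = -1
    have hJγJ : ∀ w : P1Q, act (Jmat * γ * Jmat) w = act (Emat (2*k)) (act A1 w) := by
      intro w
      rw [← act_mul]
      apply act_congr
      right
      simp only [Units.val_mul, hγ, Jmat, Emat, A1]
      apply Matrix.ext; intro i j
      fin_cases i <;> fin_cases j <;> simp [Matrix.mul_apply, Fin.sum_univ_two]
    rw [hJγJ]
    rw [← act_J_A1 (act (cfMat (negl a.reverse)) (act Jmat (act (Fmat (2*c)) (act (cfMat Ln) (Pt Ln.length)))))]
    rw [act_A1_cfMat (negl a.reverse), negl_negl]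
    rw [← act_J_A1 (act (Fmat (2*c)) (act (cfMat Ln) (Pt Ln.length)))]
    rw [act_A1_Fmat, act_A1_cfMat Ln, act_A1_Pt]
    have hRHS : towerList a (n+2) (ext2 1 (-(-1)) (fun j => -1 * ε j)) (ext2 k (-1*c) (fun j => -1 * cs j))
        = a ++ 2 * k :: (a.reverse ++ -(2 * c) :: negl Ln) := by
      rw [towerList_step a n hn]
      simp only [ext2, one_mul, neg_neg, neg_mul, mul_neg, List.map_id']
      congr 1
      rw [hLn, ← towerList_neg]
    rw [hRHS, cfVal_eq]
    have hPt : Pt (a ++ 2 * k :: (a.reverse ++ -(2 * c) :: negl Ln)).length = Pt Ln.length :=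
      Pt_parity (by simp [negl]; omega)
    rw [hPt, act_cfMat_chain a (a.reverse ++ -(2 * c) :: negl Ln) (2*k) _]
    rw [hnbt, Gm_true, Bool.not_true]
    rw [act_cfMatAux_chain false (a.reverse) (negl Ln) (-(2*c)) _]
    rw [hnbr2, Gm_false, Bool.not_false, cfMatAux_true]
    rw [act_cfMatAux_false (a.reverse)]

lemma master_even_infty (a : List ℤ) (hm : a.length % 2 = 0) (γ : GL2Z) (s k : ℤ)
    (hs : s = 1 ∨ s = -1) (hγ : γ.val = !![s, 2*k; 0, 1]) :
    act ((cfMat a * Jmat) * γ * (cfMat a * Jmat)⁻¹) infty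
      = cfVal (towerList a 2 (ext2 1 (-s) fun _ => 0) (ext2 k 0 fun _ => 0)) := by
  have hnbt : nb true a.length = true := by simp [nb, hm]
  rw [_root_.mul_inv_rev, Jmat_inv]
  simp only [act_mul]
  rw [act_inv_even' a hm, act_J_J]
  rw [act_conj_swap Jmat γ Jmat_mul_Jmat]
  rcases hs with hs | hs <;> subst hs
  · have hJγJ : Jmat * γ * Jmat = Emat (2*k) := by
      apply unit_eq
      simp only [Units.val_mul, hγ, Jmat, Emat]
      apply Matrix.ext; intro i j
      fin_cases i <;> fin_cases j <;> simp [Matrix.mul_apply, Fin.sum_univ_two]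
    rw [hJγJ]
    have hRHS : towerList a 2 (ext2 1 (-1) fun _ => (0:ℤ)) (ext2 k 0 fun _ => 0)
        = a ++ 2 * k :: negl a.reverse := by
      rw [towerList_two]
      simp only [ext2, one_mul, List.map_id']
      rfl
    rw [hRHS, cfVal_eq]
    have hPt : Pt (a ++ 2 * k :: negl a.reverse).length = infty := by
      unfold Pt
      rw [if_pos]
      simp [negl, Nat.odd_iff]
    rw [hPt, act_cfMat_chain a (negl a.reverse) (2*k) _]
    rw [hnbt, Gm_true, Bool.not_true]
    rw [act_cfMatAux_false (negl a.reverse)]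
  · have hJγJ : ∀ w : P1Q, act (Jmat * γ * Jmat) w = act (Emat (2*k)) (act A1 w) := by
      intro w
      rw [← act_mul]
      apply act_congr
      right
      simp only [Units.val_mul, hγ, Jmat, Emat, A1]
      apply Matrix.ext; intro i j
      fin_cases i <;> fin_cases j <;> simp [Matrix.mul_apply, Fin.sum_univ_two]
    rw [hJγJ]
    rw [← act_J_A1 (act (cfMat (negl a.reverse)) (act Jmat infty))]
    rw [act_A1_cfMat (negl a.reverse), negl_negl]
    rw [(act_J_A1 infty).symm, act_A1_infty]
    have hRHS : towerList a 2 (ext2 1 (-(-1)) fun _ => (0:ℤ)) (ext2 k 0 fun _ => 0)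
        = a ++ 2 * k :: a.reverse := by
      rw [towerList_two]
      simp only [ext2, one_mul, neg_neg, List.map_id']
    rw [hRHS, cfVal_eq]
    have hPt : Pt (a ++ 2 * k :: a.reverse).length = infty := by
      unfold Pt
      rw [if_pos]
      simp [Nat.odd_iff]
    rw [hPt, act_cfMat_chain a (a.reverse) (2*k) _]
    rw [hnbt, Gm_true, Bool.not_true]
    rw [act_cfMatAux_false (a.reverse)]

end Master2
section Groups

lemma A2_mul_A2 : A2 * A2 = 1 := by
  apply unit_eq
  simp [A2, Units.val_mul, Matrix.mul_fin_two, Matrix.one_fin_two]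

lemma A1_mem : A1 ∈ GammaInf := Subgroup.subset_closure (by simp)

lemma A2_mem : A2 ∈ GammaInf := Subgroup.subset_closure (by simp)

lemma Fmat_mul_Fmat (t u : ℤ) : Fmat t * Fmat u = Fmat (t + u) := by
  apply unit_eq
  simp only [Units.val_mul, Fmat]
  apply Matrix.ext; intro i j
  fin_cases i <;> fin_cases j <;> simp [Matrix.mul_apply, Fin.sum_univ_two] <;> ring

lemma Fmat_zero : Fmat 0 = 1 := by
  apply unit_eq
  simp [Fmat, Matrix.one_fin_two]

lemma A2_mul_A1 : A2 * A1 = Fmat 2 := by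
  apply unit_eq
  simp [A2, A1, Fmat, Units.val_mul, Matrix.mul_fin_two]

lemma Fmat_inv (t : ℤ) : (Fmat t)⁻¹ = Fmat (-t) := by
  apply inv_eq_of_mul_eq_one_right
  rw [Fmat_mul_Fmat]
  simp [Fmat_zero]

lemma Fmat_zpow (k : ℤ) : (Fmat 2) ^ k = Fmat (2 * k) := by
  induction k using Int.induction_on with
  | zero => simp [Fmat_zero]
  | succ i ih => rw [_root_.zpow_add_one, ih, Fmat_mul_Fmat]; ring_nf
  | pred i ih => rw [_root_.zpow_sub_one, ih, Fmat_inv, Fmat_mul_Fmat]; ring_nf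

lemma Fmat_mem (t : ℤ) : Fmat (2 * t) ∈ GammaInf := by
  rw [← Fmat_zpow, ← A2_mul_A1]
  exact zpow_mem (mul_mem A2_mem A1_mem) t

lemma mem_gammaInf_of_val (γ : GL2Z) (s k : ℤ) (hs : s = 1 ∨ s = -1)
    (hγ : γ.val = !![s, 2*k; 0, 1]) : γ ∈ GammaInf := by
  rcases hs with hs | hs <;> subst hs
  · have : γ = Fmat (2*k) := unit_eq _ _ hγ
    rw [this]
    exact Fmat_mem k
  · have : γ = Fmat (2*k) * A1 := by
      apply unit_eq
      rw [hγ]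
      simp only [Units.val_mul, Fmat, A1]
      apply Matrix.ext; intro i j
      fin_cases i <;> fin_cases j <;> simp [Matrix.mul_apply, Fin.sum_univ_two]
    rw [this]
    exact mul_mem (Fmat_mem k) A1_mem

lemma entry10_eq_zero (U : GL2Z) (h : act U infty = infty) : U.val 1 0 = 0 := by
  rw [act_infty, infty_eq, Projectivization.mk_eq_mk_iff'] at h
  obtain ⟨z, hz⟩ := h
  have h1 := congrFun hz 1
  simp at h1
  exact_mod_cast h1.symm

lemma conj_entries (γ U i : GL2Z) (h1 : γ * U = U * i) (hu10 : U.val 1 0 = 0)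
    (hiv : i.val = !![-1, (0:ℤ); 0, 1] ∨ i.val = !![-1, (2:ℤ); 0, 1]) :
    ∃ k : ℤ, γ.val = !![-1, 2*k; 0, 1] := by
  have h2 : γ.val * U.val = U.val * i.val := by rw [← Units.val_mul, h1, Units.val_mul]
  have hdet := detu U
  rw [Matrix.det_fin_two, hu10] at hdet
  simp only [mul_zero, sub_zero] at hdet
  have h00ne : U.val 0 0 ≠ 0 := by
    intro h0
    rcases hdet with h | h <;> rw [h0, zero_mul] at h <;> simp at h
  have h11u : U.val 1 1 = 1 ∨ U.val 1 1 = -1 := by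
    apply Int.isUnit_iff.mp
    apply isUnit_of_mul_isUnit_left (y := U.val 0 0)
    rw [mul_comm]
    rcases hdet with h | h <;> rw [h]
    · exact isUnit_one
    · exact Int.isUnit_iff.mpr (Or.inr rfl)
  have h11ne : U.val 1 1 ≠ 0 := by
    rcases h11u with h | h <;> rw [h] <;> norm_num
  have h11sq : U.val 1 1 * U.val 1 1 = 1 := by
    rcases h11u with h | h <;> rw [h] <;> norm_num
  have e00 : (γ.val * U.val) 0 0 = (U.val * i.val) 0 0 := by rw [h2]
  have e01 : (γ.val * U.val) 0 1 = (U.val * i.val) 0 1 := by rw [h2]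
  have e10 : (γ.val * U.val) 1 0 = (U.val * i.val) 1 0 := by rw [h2]
  have e11 : (γ.val * U.val) 1 1 = (U.val * i.val) 1 1 := by rw [h2]
  rcases hiv with hiv | hiv <;>
    simp [Matrix.mul_apply, Fin.sum_univ_two, hu10, hiv] at e00 e01 e10 e11 <;>
    [skip; skip] <;>
    · have hg10 : γ.val 1 0 = 0 := e10.resolve_right h00ne
      have hg00 : γ.val 0 0 = -1 := by
        have h : (γ.val 0 0 + 1) * U.val 0 0 = 0 := by linear_combination e00
        rcases mul_eq_zero.mp h with h' | h'
        · linarith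
        · exact absurd h' h00ne
      have hg11 : γ.val 1 1 = 1 := by
        rw [hg10] at e11
        have h : (γ.val 1 1 - 1) * U.val 1 1 = 0 := by linear_combination e11
        rcases mul_eq_zero.mp h with h' | h'
        · linarith
        · exact absurd h' h11ne
      rw [hg00] at e01
      first
      | (refine ⟨U.val 0 1 * U.val 1 1, ?_⟩
         have hg01 : γ.val 0 1 = 2 * (U.val 0 1 * U.val 1 1) := by
           linear_combination U.val 1 1 * e01 - γ.val 0 1 * h11sq
         rw [Matrix.eta_fin_two γ.val, hg00, hg01, hg10, hg11])
      | (refine ⟨(U.val 0 0 + U.val 0 1) * U.val 1 1, ?_⟩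
         have hg01 : γ.val 0 1 = 2 * ((U.val 0 0 + U.val 0 1) * U.val 1 1) := by
           linear_combination U.val 1 1 * e01 - γ.val 0 1 * h11sq
         rw [Matrix.eta_fin_two γ.val, hg00, hg01, hg10, hg11])

end Groups
section Assembly

/-- The canonical matrix `B₀` with `B₀ ∞ = r`. -/
def B0 (a : List ℤ) : GL2Z := if a.length % 2 = 1 then cfMat a else cfMat a * Jmat

lemma act_B0_infty (a : List ℤ) (r : ℚ) (hr : cfVal a = ratPt r) :
    act (B0 a) infty = ratPt r := by
  unfold B0
  split_ifs with h
  · rw [← hr, cfVal_eq]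
    congr 1
    unfold Pt
    rw [if_pos (Nat.odd_iff.mpr h)]
  · rw [act_mul, act_Jmat_infty, ← hr, cfVal_eq]
    congr 1
    unfold Pt
    rw [if_neg]
    simp [Nat.odd_iff, h]

lemma masterE (a : List ℤ) (γ : GL2Z) (s k : ℤ) (hs : s = 1 ∨ s = -1)
    (hγ : γ.val = !![s, 2*k; 0, 1]) (n : ℕ) (hn : 1 ≤ n) (ε cs : ℕ → ℤ) (c : ℤ) :
    act (B0 a * γ * (B0 a)⁻¹) (act (Fmat (2*c)) (cfVal (towerList a n ε cs)))
      = cfVal (towerList a (n+2)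
          (ext2 1 (-s) (fun j => s * ε j)) (ext2 k (s*c) (fun j => s * cs j))) := by
  unfold B0
  split_ifs with h
  · exact master_odd a h γ s k hs hγ n hn ε cs c
  · exact master_even a (by omega) γ s k hs hγ n hn ε cs c

lemma masterI (a : List ℤ) (γ : GL2Z) (s k : ℤ) (hs : s = 1 ∨ s = -1)
    (hγ : γ.val = !![s, 2*k; 0, 1]) :
    act (B0 a * γ * (B0 a)⁻¹) infty
      = cfVal (towerList a 2 (ext2 1 (-s) fun _ => 0) (ext2 k 0 fun _ => 0)) := by
  unfold B0
  split_ifs with h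
  · exact master_odd_infty a h γ s k hs hγ
  · exact master_even_infty a (by omega) γ s k hs hγ

lemma cfVal_negl (l : List ℤ) : cfVal (negl l) = act A1 (cfVal l) := by
  rw [cfVal_eq, cfVal_eq, cfMat_negl, act_mul, act_mul,
    show (negl l).length = l.length by simp [negl], act_A1_Pt]

lemma towerList_eq_negl (a : List ℤ) (n : ℕ) (ε cs : ℕ → ℤ) :
    towerList a n ε cs = negl (towerList a n (fun j => -ε j) (fun j => -cs j)) := by
  rw [← towerList_neg]
  congr 1 <;> funext j <;> ring

/-- The "tower value" predicate. -/
def IsTow (a : List ℤ) (x : P1Q) : Prop :=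
  x = infty ∨ ∃ n : ℕ, 1 ≤ n ∧ ∃ c : ℤ, ∃ ε : ℕ → ℤ, (∀ j < n, ε j = 1 ∨ ε j = -1) ∧
    ∃ cs : ℕ → ℤ, x = act (Fmat (2 * c)) (cfVal (towerList a n ε cs))

lemma IsTow_infty (a : List ℤ) : IsTow a infty := Or.inl rfl

lemma IsTow_r (a : List ℤ) (r : ℚ) (hr : cfVal a = ratPt r) : IsTow a (ratPt r) := by
  right
  refine ⟨1, le_refl 1, 0, (fun _ => 1), fun j _ => Or.inl rfl, (fun _ => 0), ?_⟩
  rw [towerList_one, map_one_mul, hr, mul_zero, Fmat_zero, act_one]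

lemma IsTow_A1 (a : List ℤ) (x : P1Q) (h : IsTow a x) : IsTow a (act A1 x) := by
  rcases h with h | ⟨n, hn, c, ε, hε, cs, h⟩
  · rw [h, act_A1_infty]; exact Or.inl rfl
  · right
    refine ⟨n, hn, -c, (fun j => -ε j), ?_, (fun j => -cs j), ?_⟩
    · intro j hj; rcases hε j hj with h' | h' <;> simp [h']
    · rw [h, cfVal_eq, act_A1_Fmat, act_A1_cfMat, act_A1_Pt, towerList_neg, cfVal_eq]
      rw [show (2:ℤ) * -c = -(2*c) by ring,
        show (negl (towerList a n ε cs)).length = (towerList a n ε cs).length by simp [negl]]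

lemma IsTow_F (a : List ℤ) (t : ℤ) (x : P1Q) (h : IsTow a x) :
    IsTow a (act (Fmat (2*t)) x) := by
  rcases h with h | ⟨n, hn, c, ε, hε, cs, h⟩
  · rw [h, act_Fmat_infty]; exact Or.inl rfl
  · right
    refine ⟨n, hn, t + c, ε, hε, cs, ?_⟩
    rw [h, ← act_mul, Fmat_mul_Fmat, show (2:ℤ)*t + 2*c = 2*(t+c) by ring]

lemma A2_eq : A2 = Fmat 2 * A1 := by
  apply unit_eq
  simp [A2, Fmat, A1, Units.val_mul, Matrix.mul_fin_two]

lemma IsTow_A2 (a : List ℤ) (x : P1Q) (h : IsTow a x) : IsTow a (act A2 x) := by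
  rw [A2_eq, act_mul, show (2:ℤ) = 2*1 by ring]
  exact IsTow_F a 1 _ (IsTow_A1 a x h)

lemma ext2_cond (y : ℤ) (hy : y = 1 ∨ y = -1) (f : ℕ → ℤ) (n : ℕ)
    (hf : ∀ j < n, f j = 1 ∨ f j = -1) :
    ∀ j < n + 2, ext2 1 y f j = 1 ∨ ext2 1 y f j = -1 := by
  intro j hj
  rcases j with _ | j
  · exact Or.inl rfl
  rcases j with _ | j
  · exact hy
  · exact hf j (by omega)

lemma IsTow_conj (a : List ℤ) (γ : GL2Z) (s k : ℤ) (hs : s = 1 ∨ s = -1)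
    (hγ : γ.val = !![s, 2*k; 0, 1]) (x : P1Q) (h : IsTow a x) :
    IsTow a (act (B0 a * γ * (B0 a)⁻¹) x) := by
  have hsy : -s = 1 ∨ -s = -1 := by rcases hs with h' | h' <;> simp [h']
  rcases h with h | ⟨n, hn, c, ε, hε, cs, h⟩
  · rw [h, masterI a γ s k hs hγ]
    right
    refine ⟨2, by norm_num, 0, ext2 1 (-s) (fun _ => 0), ?_,
      ext2 k 0 (fun _ => 0), ?_⟩
    · have := ext2_cond (-s) hsy (fun _ => 0) 0 (by omega)
      simpa using this
    · rw [mul_zero, Fmat_zero, act_one]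
  · rw [h, masterE a γ s k hs hγ n hn ε cs c]
    right
    refine ⟨n+2, by omega, 0, ext2 1 (-s) (fun j => s * ε j), ?_,
      ext2 k (s*c) (fun j => s * cs j), ?_⟩
    · apply ext2_cond (-s) hsy _ n
      intro j hj
      rcases hs with h' | h' <;> rcases hε j hj with h'' | h'' <;> simp [h', h'']
    · rw [mul_zero, Fmat_zero, act_one]

end Assembly
section Forward

lemma gammaHat_le_closure (B : GL2Z) :
    GammaHat B ≤ Subgroup.closure {A1, A2, B * A1 * B⁻¹, B * A2 * B⁻¹} := by
  rw [GammaHat]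
  apply sup_le
  · rw [Gamma, GammaInf, MonoidHom.map_closure]
    apply Subgroup.closure_mono
    rintro y ⟨z, hz, rfl⟩
    simp only [Set.mem_insert_iff, Set.mem_singleton_iff] at hz
    rcases hz with rfl | rfl
    · right; right; left; simp [MulAut.conj_apply]
    · right; right; right; simp [MulAut.conj_apply]
  · rw [GammaInf]
    apply Subgroup.closure_mono
    intro y hy
    simp only [Set.mem_insert_iff, Set.mem_singleton_iff] at hy ⊢
    tauto

lemma forward_stab (a : List ℤ) (r : ℚ) (hr : cfVal a = ratPt r) (B : GL2Z)
    (hB : act B infty = ratPt r) (M : GL2Z) (hM : M ∈ GammaHat B) (x : P1Q)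
    (h : IsTow a x) : IsTow a (act M x) := by
  have hB0 := act_B0_infty a r hr
  have hU : act ((B0 a)⁻¹ * B) infty = infty := by
    apply act_left_cancel (B0 a)
    rw [← act_mul, mul_inv_cancel_left, hB]
    rw [← hB0]
  have hu10 := entry10_eq_zero _ hU
  -- the two conjugated generators have the right form
  have hform : ∀ i : GL2Z, i.val = !![-1, (0:ℤ); 0, 1] ∨ i.val = !![-1, (2:ℤ); 0, 1] →
      ∃ k : ℤ, (((B0 a)⁻¹ * B) * i * (((B0 a)⁻¹ * B))⁻¹).val = !![-1, 2*k; 0, 1] := by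
    intro i hiv
    apply conj_entries _ ((B0 a)⁻¹ * B) i _ hu10 hiv
    group
  have hBconj : ∀ i : GL2Z, B * i * B⁻¹
      = B0 a * (((B0 a)⁻¹ * B) * i * (((B0 a)⁻¹ * B))⁻¹) * (B0 a)⁻¹ := by
    intro i
    group
  -- stability of the four generators
  have stab : ∀ g ∈ ({A1, A2, B * A1 * B⁻¹, B * A2 * B⁻¹} : Set GL2Z),
      ∀ y : P1Q, IsTow a y → IsTow a (act g y) := by
    intro g hg y hy
    simp only [Set.mem_insert_iff, Set.mem_singleton_iff] at hg
    rcases hg with rfl | rfl | rfl | rfl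
    · exact IsTow_A1 a y hy
    · exact IsTow_A2 a y hy
    · obtain ⟨k, hk⟩ := hform A1 (Or.inl rfl)
      rw [hBconj A1]
      exact IsTow_conj a _ (-1) k (Or.inr rfl) hk y hy
    · obtain ⟨k, hk⟩ := hform A2 (Or.inr rfl)
      rw [hBconj A2]
      exact IsTow_conj a _ (-1) k (Or.inr rfl) hk y hy
  -- each generator is an involution
  have ginv : ∀ g ∈ ({A1, A2, B * A1 * B⁻¹, B * A2 * B⁻¹} : Set GL2Z), g⁻¹ = g := by
    intro g hg
    simp only [Set.mem_insert_iff, Set.mem_singleton_iff] at hg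
    rcases hg with rfl | rfl | rfl | rfl
    · exact inv_eq_of_mul_eq_one_right A1_mul_A1
    · exact inv_eq_of_mul_eq_one_right A2_mul_A2
    · apply inv_eq_of_mul_eq_one_right
      rw [show B * A1 * B⁻¹ * (B * A1 * B⁻¹) = B * (A1 * A1) * B⁻¹ by group,
        A1_mul_A1, mul_one, mul_inv_cancel]
    · apply inv_eq_of_mul_eq_one_right
      rw [show B * A2 * B⁻¹ * (B * A2 * B⁻¹) = B * (A2 * A2) * B⁻¹ by group,
        A2_mul_A2, mul_one, mul_inv_cancel]
  have key : ∀ N ∈ Subgroup.closure ({A1, A2, B * A1 * B⁻¹, B * A2 * B⁻¹} : Set GL2Z),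
      (∀ y, IsTow a y → IsTow a (act N y)) ∧ (∀ y, IsTow a y → IsTow a (act N⁻¹ y)) := by
    intro N hN
    induction hN using Subgroup.closure_induction with
    | mem g hg =>
      refine ⟨stab g hg, ?_⟩
      rw [ginv g hg]
      exact stab g hg
    | one =>
      constructor <;> intro y hy <;> simp only [inv_one, act_one] <;> exact hy
    | mul p q hp hq ihp ihq =>
      refine ⟨fun y hy => ?_, fun y hy => ?_⟩
      · rw [act_mul]; exact ihp.1 _ (ihq.1 _ hy)
      · rw [_root_.mul_inv_rev, act_mul]; exact ihq.2 _ (ihp.2 _ hy)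
    | inv p hp ihp =>
      refine ⟨ihp.2, fun y hy => ?_⟩
      rw [inv_inv]; exact ihp.1 _ hy
  exact (key M (gammaHat_le_closure B hM)).1 x h

end Forward
section Backward

lemma gamma_exists (s k : ℤ) (hs : s = 1 ∨ s = -1) :
    ∃ γ : GL2Z, γ.val = !![s, 2*k; 0, 1] ∧ γ ∈ GammaInf := by
  rcases hs with hs | hs <;> subst hs
  · exact ⟨Fmat (2*k), rfl, Fmat_mem k⟩
  · refine ⟨Fmat (2*k) * A1, ?_, mul_mem (Fmat_mem k) A1_mem⟩
    simp only [Units.val_mul, Fmat, A1]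
    apply Matrix.ext; intro i j
    fin_cases i <;> fin_cases j <;> simp [Matrix.mul_apply, Fin.sum_univ_two]

lemma gammaInf_le_hat (B : GL2Z) : GammaInf ≤ GammaHat B := le_sup_right

lemma conj_mem_gammaHat (a : List ℤ) (γ : GL2Z) (hγ : γ ∈ GammaInf) :
    B0 a * γ * (B0 a)⁻¹ ∈ GammaHat (B0 a) := by
  apply Subgroup.mem_sup_left
  exact Subgroup.mem_map.mpr ⟨γ, hγ, by simp [MulAut.conj_apply]⟩

lemma backward (a : List ℤ) (r : ℚ) (hr : cfVal a = ratPt r) :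
    ∀ n : ℕ, 1 ≤ n → ∀ ε cs : ℕ → ℤ, (∀ j < n, ε j = 1 ∨ ε j = -1) →
      ∃ M ∈ GammaHat (B0 a),
        cfVal (towerList a n ε cs) = act M (ratPt r) ∨
        cfVal (towerList a n ε cs) = act M infty := by
  intro n
  induction n using Nat.strong_induction_on with
  | _ n ih =>
  intro hn ε cs hε
  have flip : ∀ ε cs : ℕ → ℤ,
      (∃ M ∈ GammaHat (B0 a),
        cfVal (towerList a n (fun j => -ε j) (fun j => -cs j)) = act M (ratPt r) ∨
        cfVal (towerList a n (fun j => -ε j) (fun j => -cs j)) = act M infty) →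
      (∃ M ∈ GammaHat (B0 a),
        cfVal (towerList a n ε cs) = act M (ratPt r) ∨
        cfVal (towerList a n ε cs) = act M infty) := by
    rintro ε cs ⟨M, hM, hp⟩
    refine ⟨A1 * M, mul_mem (gammaInf_le_hat _ A1_mem) hM, ?_⟩
    have heq : cfVal (towerList a n ε cs)
        = act A1 (cfVal (towerList a n (fun j => -ε j) (fun j => -cs j))) := by
      rw [towerList_eq_negl a n ε cs, cfVal_negl]
    rcases hp with hp | hp
    · left; rw [heq, hp, act_mul]
    · right; rw [heq, hp, act_mul]
  rcases n with _ | _ | _ | n'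
  · omega
  · -- n = 1
    have pos : ∀ ε cs : ℕ → ℤ, ε 0 = 1 →
        ∃ M ∈ GammaHat (B0 a),
          cfVal (towerList a 1 ε cs) = act M (ratPt r) ∨
          cfVal (towerList a 1 ε cs) = act M infty := by
      intro ε cs h0
      refine ⟨1, one_mem _, Or.inl ?_⟩
      rw [towerList_one]
      simp only [h0, one_mul, List.map_id']
      rw [hr, act_one]
    rcases hε 0 (by omega) with h0 | h0
    · exact pos ε cs h0
    · exact flip ε cs (pos _ _ (by rw [h0]; norm_num))
  · -- n = 2
    have pos : ∀ ε cs : ℕ → ℤ, (∀ j < 2, ε j = 1 ∨ ε j = -1) → ε 0 = 1 →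
        ∃ M ∈ GammaHat (B0 a),
          cfVal (towerList a 2 ε cs) = act M (ratPt r) ∨
          cfVal (towerList a 2 ε cs) = act M infty := by
      intro ε cs hε h0
      have key : ∀ s : ℤ, (s = 1 ∨ s = -1) → ε 1 = -s →
          ∃ M ∈ GammaHat (B0 a),
            cfVal (towerList a 2 ε cs) = act M (ratPt r) ∨
            cfVal (towerList a 2 ε cs) = act M infty := by
        intro s hs hs1
        obtain ⟨γ, hγv, hγm⟩ := gamma_exists s (cs 0) hs
        refine ⟨B0 a * γ * (B0 a)⁻¹, conj_mem_gammaHat a γ hγm, Or.inr ?_⟩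
        rw [masterI a γ s (cs 0) hs hγv]
        congr 1
        apply towerList_congr
        · intro j hj
          rcases j with _ | _ | j
          · exact h0
          · exact hs1
          · omega
        · intro j hj
          rcases j with _ | j
          · rfl
          · omega
      rcases hε 1 (by omega) with h1 | h1
      · exact key (-1) (Or.inr rfl) (by simp [h1])
      · exact key 1 (Or.inl rfl) (by simp [h1])
    rcases hε 0 (by omega) with h0 | h0
    · exact pos ε cs hε h0
    · refine flip ε cs (pos _ _ ?_ (by rw [h0]; norm_num))
      intro j hj
      rcases hε j hj with h' | h' <;> simp [h']
  · -- n = n' + 3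
    have pos : ∀ ε cs : ℕ → ℤ, (∀ j < n'+3, ε j = 1 ∨ ε j = -1) → ε 0 = 1 →
        ∃ M ∈ GammaHat (B0 a),
          cfVal (towerList a (n'+3) ε cs) = act M (ratPt r) ∨
          cfVal (towerList a (n'+3) ε cs) = act M infty := by
      intro ε cs hε h0
      have key : ∀ s : ℤ, (s = 1 ∨ s = -1) → ε 1 = -s →
          ∃ M ∈ GammaHat (B0 a),
            cfVal (towerList a (n'+3) ε cs) = act M (ratPt r) ∨
            cfVal (towerList a (n'+3) ε cs) = act M infty := by
        intro s hs hs1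
        obtain ⟨γ, hγv, hγm⟩ := gamma_exists s (cs 0) hs
        have hε'c : ∀ j < n'+1, s * ε (j+2) = 1 ∨ s * ε (j+2) = -1 := by
          intro j hj
          rcases hs with h' | h' <;> rcases hε (j+2) (by omega) with h'' | h'' <;>
            simp [h', h'']
        obtain ⟨M, hM, hp⟩ := ih (n'+1) (by omega) (by omega)
          (fun j => s * ε (j+2)) (fun j => s * cs (j+2)) hε'c
        have hme := masterE a γ s (cs 0) hs hγv (n'+1) (by omega)
          (fun j => s * ε (j+2)) (fun j => s * cs (j+2)) (s * cs 1)
        have hlist : towerList a ((n'+1)+2)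
            (ext2 1 (-s) (fun j => s * (s * ε (j+2))))
            (ext2 (cs 0) (s * (s * cs 1)) (fun j => s * (s * cs (j+2))))
            = towerList a (n'+3) ε cs := by
          apply towerList_congr
          · intro j hj
            rcases j with _ | _ | j
            · exact h0.symm
            · exact hs1.symm
            · show s * (s * ε (j+2)) = ε (j+2)
              rcases hs with h' | h' <;> rw [h'] <;> ring
          · intro j hj
            rcases j with _ | _ | j
            · rfl
            · show s * (s * cs 1) = cs 1
              rcases hs with h' | h' <;> rw [h'] <;> ring
            · show s * (s * cs (j+2)) = cs (j+2)
              rcases hs with h' | h' <;> rw [h'] <;> ring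
        rw [hlist] at hme
        rcases hp with hp | hp
        · refine ⟨B0 a * γ * (B0 a)⁻¹ * (Fmat (2*(s * cs 1)) * M),
            mul_mem (conj_mem_gammaHat a γ hγm)
              (mul_mem (gammaInf_le_hat _ (Fmat_mem _)) hM), Or.inl ?_⟩
          rw [← hme, hp]
          simp only [act_mul]
        · refine ⟨B0 a * γ * (B0 a)⁻¹ * (Fmat (2*(s * cs 1)) * M),
            mul_mem (conj_mem_gammaHat a γ hγm)
              (mul_mem (gammaInf_le_hat _ (Fmat_mem _)) hM), Or.inr ?_⟩
          rw [← hme, hp]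
          simp only [act_mul]
      rcases hε 1 (by omega) with h1 | h1
      · exact key (-1) (Or.inr rfl) (by simp [h1])
      · exact key 1 (Or.inl rfl) (by simp [h1])
    rcases hε 0 (by omega) with h0 | h0
    · exact pos ε cs hε h0
    · refine flip ε cs (pos _ _ ?_ (by rw [h0]; norm_num))
      intro j hj
      rcases hε j hj with h' | h' <;> simp [h']

end Backward
/-- **Proposition 5.1.** For `r = [a₁, …, a_m] ∈ ℚ` with all `aᵢ` nonzero, a rational
number `r̃` belongs to the `Γ̂_r`-orbit of `r` or of `∞` if and only if
`r̃ = 2c + [ε₁a, 2c₁, ε₂a⁻¹, 2c₂, ε₃a, …, 2c_{n−1}, εₙa^{(−1)^{n−1}}]` for some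
`n ≥ 1`, `c ∈ ℤ`, signs `ε_j ∈ {±1}` and integers `c_j`. -/
theorem mem_orbit_iff_continued_fraction (a : List ℤ) (ha : a ≠ [])
    (ha0 : ∀ x ∈ a, x ≠ 0) (r : ℚ) (hr : cfVal a = ratPt r) (r' : ℚ) :
    inOrbit r (ratPt r') ↔
      ∃ n : ℕ, 1 ≤ n ∧ ∃ c : ℤ, ∃ ε : ℕ → ℤ, (∀ j < n, ε j = 1 ∨ ε j = -1) ∧
        ∃ cs : ℕ → ℤ, act (Fmat (2 * c)) (cfVal (towerList a n ε cs)) = ratPt r' := by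
  constructor
  · rintro ⟨B, hB, M, hM, hact⟩
    have hT : IsTow a (ratPt r') := by
      rcases hact with hact | hact
      · rw [← hact]
        exact forward_stab a r hr B hB M hM _ (IsTow_r a r hr)
      · rw [← hact]
        exact forward_stab a r hr B hB M hM _ (IsTow_infty a)
    rcases hT with hT | ⟨n, hn, c, ε, hε, cs, hT⟩
    · exact absurd hT (ratPt_ne_infty r')
    · exact ⟨n, hn, c, ε, hε, cs, hT.symm⟩
  · rintro ⟨n, hn, c, ε, hε, cs, hval⟩
    refine ⟨B0 a, act_B0_infty a r hr, ?_⟩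
    obtain ⟨M, hM, hp⟩ := backward a r hr n hn ε cs hε
    refine ⟨Fmat (2*c) * M, mul_mem (gammaInf_le_hat _ (Fmat_mem c)) hM, ?_⟩
    rcases hp with hp | hp
    · left
      rw [act_mul, ← hp]
      exact hval
    · right
      rw [act_mul, ← hp]
      exact hval
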